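/- Let (x, y, z) be an integer solution of x² + y² + z² − xyz = 4 that is weakly minimal, i.e. |x| ≤ |yz − x|, |y| ≤ |xz − y|, and |z| ≤ |xy − z|. Then, up to permuting coordinates and changing the signs of two coordinates, (x,y,z) equals (2,0,0), (−1,1,1), or (2,t,t) for some integer t ≥ 2. -/

import Mathlib

lemma sortedKey (u v w : ℤ) (hwv : w ≤ v) (hvu : v ≤ u) (hv : 1 ≤ v)
    (heq : u^2 + v^2 + w^2 - u*v*w = 4) (hmin : 2*u ≤ v*w) :
    w = 2 ∧ u = v := by
  have hw : 2 ≤ w := by nlinarith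
  have hk : 0 ≤ (u - v) * (v*w - u - v) :=
    mul_nonneg (by linarith) (by linarith)
  have hw2 : w ≤ 2 := by
    by_contra h
    push_neg at h
    have h3 : 3 ≤ w := by linarith
    have h1 : v^2*(w-2) ≤ (w+2)*(w-2) := by nlinarith
    have h2 : v^2 ≤ w + 2 := le_of_mul_le_mul_right h1 (by linarith)
    nlinarith
  have hw2' : w = 2 := le_antisymm hw2 hw
  subst hw2'
  have : (u - v)^2 = 0 := by ring_nf; nlinarith
  have := pow_eq_zero_iff (n := 2) (by norm_num) |>.mp this
  constructor <;> linarith [sub_eq_zero.mp this]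

lemma key (x y z : ℤ)
    (heq : x ^ 2 + y ^ 2 + z ^ 2 - x * y * z = 4)
    (h1 : 2 * (x*y*z) ≤ (y*z)^2)
    (hyx : |y| ≤ |x|) (hzy : |z| ≤ |y|) :
    ({|x|, |y|, |z|} : Multiset ℤ) = {2, 0, 0} ∨
    (|x| = 1 ∧ |y| = 1 ∧ |z| = 1 ∧ x * y * z = -1) ∨
    (∃ t : ℤ, 2 ≤ t ∧ ({|x|, |y|, |z|} : Multiset ℤ) = {2, t, t} ∧
      x * y * z = 2 * t ^ 2) := by
  rcases le_or_gt (x*y*z) 0 with hp | hp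
  · -- product ≤ 0 : bounded case
    have hx2 : x^2 ≤ 4 := by nlinarith [sq_nonneg y, sq_nonneg z]
    have hy2 : y^2 ≤ 4 := by nlinarith [sq_nonneg x, sq_nonneg z]
    have hz2 : z^2 ≤ 4 := by nlinarith [sq_nonneg x, sq_nonneg y]
    have hxl : -2 ≤ x := by nlinarith [sq_nonneg (x+2)]
    have hxr : x ≤ 2 := by nlinarith [sq_nonneg (x-2)]
    have hyl : -2 ≤ y := by nlinarith [sq_nonneg (y+2)]
    have hyr : y ≤ 2 := by nlinarith [sq_nonneg (y-2)]
    have hzl : -2 ≤ z := by nlinarith [sq_nonneg (z+2)]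
    have hzr : z ≤ 2 := by nlinarith [sq_nonneg (z-2)]
    clear h1 hyx hzy hx2 hy2 hz2
    interval_cases x <;> interval_cases y <;> interval_cases z <;>
      (revert heq hp; norm_num) <;>
      first
        | (left; decide)
        | (right; left; decide)
        | decide
  · -- product > 0
    have hy0 : y ≠ 0 := by rintro rfl; simp at hp
    have hz0 : z ≠ 0 := by rintro rfl; simp at hp
    have hv : 1 ≤ |y| := by have := abs_pos.mpr hy0; omega
    have hprod : |x| * |y| * |z| = x*y*z := by
      rw [← abs_mul, ← abs_mul]; exact abs_of_pos hp
    have heq' : |x| ^ 2 + |y| ^ 2 + |z| ^ 2 - |x| * |y| * |z| = 4 := by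
      rw [hprod, sq_abs, sq_abs, sq_abs]; exact heq
    have hyzpos : 0 < |y| * |z| := mul_pos (abs_pos.mpr hy0) (abs_pos.mpr hz0)
    have hmin : 2 * |x| ≤ |y| * |z| := by
      have h1' : 2 * (|x| * (|y| * |z|)) ≤ (|y| * |z|)^2 := by
        have : (|y| * |z|)^2 = (y*z)^2 := by rw [← abs_mul, sq_abs]
        rw [this]; nlinarith [hprod]
      nlinarith
    obtain ⟨hz2, hxy⟩ := sortedKey |x| |y| |z| hzy hyx hv heq' hmin
    right; right
    refine ⟨|y|, by linarith [hzy, hz2.ge], ?_, ?_⟩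
    · rw [hxy, hz2]
      exact (congrArg _ (Multiset.cons_swap _ _ _)).trans (Multiset.cons_swap _ _ _)
    · rw [← hprod, hxy, hz2]; ring

lemma ms_swap12 (a b c : ℤ) : ({a, b, c} : Multiset ℤ) = {b, a, c} :=
  Multiset.cons_swap a b _

lemma ms_swap23 (a b c : ℤ) : ({a, b, c} : Multiset ℤ) = {a, c, b} :=
  congrArg _ (Multiset.cons_swap b c _)

lemma rhsPerm (x y z x' y' z' : ℤ)
    (hm : ({|x'|, |y'|, |z'|} : Multiset ℤ) = {|x|, |y|, |z|})
    (hp : x' * y' * z' = x * y * z) :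
    (({|x'|, |y'|, |z'|} : Multiset ℤ) = {2, 0, 0} ∨
     (|x'| = 1 ∧ |y'| = 1 ∧ |z'| = 1 ∧ x' * y' * z' = -1) ∨
     (∃ t : ℤ, 2 ≤ t ∧ ({|x'|, |y'|, |z'|} : Multiset ℤ) = {2, t, t} ∧
       x' * y' * z' = 2 * t ^ 2)) →
    (({|x|, |y|, |z|} : Multiset ℤ) = {2, 0, 0} ∨
     (|x| = 1 ∧ |y| = 1 ∧ |z| = 1 ∧ x * y * z = -1) ∨
     (∃ t : ℤ, 2 ≤ t ∧ ({|x|, |y|, |z|} : Multiset ℤ) = {2, t, t} ∧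
       x * y * z = 2 * t ^ 2)) := by
  rintro (h | ⟨h1, h2, h3, h4⟩ | ⟨t, ht, hm2, hp2⟩)
  · left; rw [← hm]; exact h
  · right; left
    have hall : ({|x|, |y|, |z|} : Multiset ℤ) = {1, 1, 1} := by
      rw [← hm, h1, h2, h3]
    have ex : ∀ a : ℤ, a ∈ ({|x|, |y|, |z|} : Multiset ℤ) → a = 1 := by
      rw [hall]; intro a ha
      rcases Multiset.mem_cons.mp ha with h | ha
      · exact h
      rcases Multiset.mem_cons.mp ha with h | ha
      · exact h
      · exact Multiset.mem_singleton.mp ha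
    exact ⟨ex _ (by simp), ex _ (by simp), ex _ (by simp), hp ▸ h4⟩
  · right; right
    exact ⟨t, ht, by rw [← hm]; exact hm2, by rw [← hp]; exact hp2⟩

/-- a weakly minimal integer solution of `x² + y² + z² − xyz = 4`
is, up to permutations and simultaneous sign changes of two coordinates,
equal to `(2,0,0)`, `(−1,1,1)` or `(2,t,t)` with `t ≥ 2`.  The respective
orbits under permutations and double sign changes are characterized by the
multiset of absolute values together with the product of the coordinates. -/
theorem stmt3 (x y z : ℤ)
    (heq : x ^ 2 + y ^ 2 + z ^ 2 - x * y * z = 4)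
    (hmx : |x| ≤ |y * z - x|) (hmy : |y| ≤ |x * z - y|) (hmz : |z| ≤ |x * y - z|) :
    ({|x|, |y|, |z|} : Multiset ℤ) = {2, 0, 0} ∨
    (|x| = 1 ∧ |y| = 1 ∧ |z| = 1 ∧ x * y * z = -1) ∨
    (∃ t : ℤ, 2 ≤ t ∧ ({|x|, |y|, |z|} : Multiset ℤ) = {2, t, t} ∧
      x * y * z = 2 * t ^ 2) := by
  have sq : ∀ a b : ℤ, |a| ≤ |b| → a ^ 2 ≤ b ^ 2 := by
    intro a b h
    have := mul_self_le_mul_self (abs_nonneg a) h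
    nlinarith [abs_mul_abs_self a, abs_mul_abs_self b]
  have k1 : 2 * (x * y * z) ≤ (y * z) ^ 2 := by nlinarith [sq x (y * z - x) hmx]
  have k2 : 2 * (x * y * z) ≤ (x * z) ^ 2 := by nlinarith [sq y (x * z - y) hmy]
  have k3 : 2 * (x * y * z) ≤ (x * y) ^ 2 := by nlinarith [sq z (x * y - z) hmz]
  rcases le_total |x| |y| with hxy | hxy <;>
    rcases le_total |y| |z| with hyz | hyz <;>
      rcases le_total |x| |z| with hxz | hxz
  · exact rhsPerm x y z z y x
      ((ms_swap12 _ _ _).trans ((ms_swap23 _ _ _).trans (ms_swap12 _ _ _)))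
      (by ring)
      (key z y x (by linear_combination heq) (by nlinarith [k3]) hyz hxy)
  · exact rhsPerm x y z z y x
      ((ms_swap12 _ _ _).trans ((ms_swap23 _ _ _).trans (ms_swap12 _ _ _)))
      (by ring)
      (key z y x (by linear_combination heq) (by nlinarith [k3]) hyz hxy)
  · exact rhsPerm x y z y z x
      ((ms_swap23 _ _ _).trans (ms_swap12 _ _ _))
      (by ring)
      (key y z x (by linear_combination heq) (by nlinarith [k2]) hyz hxz)
  · exact rhsPerm x y z y x z
      (ms_swap12 _ _ _)
      (by ring)
      (key y x z (by linear_combination heq) (by nlinarith [k2]) hxy hxz)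
  · exact rhsPerm x y z z x y
      ((ms_swap12 _ _ _).trans (ms_swap23 _ _ _))
      (by ring)
      (key z x y (by linear_combination heq) (by nlinarith [k3]) hxz hxy)
  · exact rhsPerm x y z x z y
      (ms_swap23 _ _ _)
      (by ring)
      (key x z y (by linear_combination heq) (by nlinarith [k1]) hxz hyz)
  · exact rhsPerm x y z z x y
      ((ms_swap12 _ _ _).trans (ms_swap23 _ _ _))
      (by ring)
      (key z x y (by linear_combination heq) (by nlinarith [k3]) hxz hxy)
  · exact rhsPerm x y z x y z rfl rfl
      (key x y z heq k1 hxy hyz)
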